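/- Let N ≥ 1 be an integer and f a real number with 0 < f < 1/N. Then every complex eigenvalue μ of the simple Leslie matrix L_f of order N satisfies |μ| < 1. -/

import Mathlib

/-- The simple Leslie matrix of order `N` with constant fertility rate `f`:
first row all `f`, subdiagonal entries `1`, all other entries `0`. -/
def leslieSimple (N : ℕ) (f : ℝ) : Matrix (Fin N) (Fin N) ℝ :=
  fun i j => if i.val = 0 then f else if i.val = j.val + 1 then 1 else 0

/-- If `N ≥ 1` and `0 < f < 1/N`, then every complex eigenvalue of the simple Leslie
matrix `L_f` (i.e., every root of its characteristic polynomial over `ℂ`) has modulus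
strictly less than `1`. -/
theorem leslie_eigenvalues_lt_one (N : ℕ) (hN : 1 ≤ N) (f : ℝ) (hf0 : 0 < f)
    (hf : f < 1 / (N : ℝ)) :
    ∀ μ : ℂ, ((leslieSimple N f).map (Complex.ofReal ·)).charpoly.IsRoot μ →
      ‖μ‖ < 1 := by
  intro μ hμ
  set M : Matrix (Fin N) (Fin N) ℂ := (leslieSimple N f).map (Complex.ofReal ·) with hMdef
  -- eigenvalue: det (diag μ - M) = 0
  have hmap : (M.charmatrix).map (Polynomial.eval μ)
      = Matrix.diagonal (fun _ : Fin N => μ) - M := by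
    ext i j
    simp only [Matrix.charmatrix_apply, Matrix.map_apply, Matrix.sub_apply, Matrix.diagonal,
      Matrix.of_apply]
    by_cases h : i = j <;> simp [h]
  have hdet : (Matrix.diagonal (fun _ : Fin N => μ) - M).det = 0 := by
    have h := RingHom.map_det (Polynomial.evalRingHom μ) (Matrix.charmatrix M)
    rw [RingHom.mapMatrix_apply] at h
    rw [← hmap, show M.charmatrix.map (Polynomial.eval μ)
        = M.charmatrix.map ⇑(Polynomial.evalRingHom μ) from rfl, ← h]
    exact hμ
  obtain ⟨v, hv0, hv⟩ := Matrix.exists_mulVec_eq_zero_iff.mpr hdet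
  -- M.mulVec v = μ • v
  have hEig : ∀ i, M.mulVec v i = μ * v i := by
    intro i
    have := congrFun hv i
    simp [Matrix.sub_mulVec, Matrix.mulVec_diagonal, Pi.sub_apply, sub_eq_zero] at this
    exact this.symm
  -- row k+1 relation
  have hrow : ∀ k (hk : k + 1 < N), v ⟨k, by omega⟩ = μ * v ⟨k + 1, hk⟩ := by
    intro k hk
    have h := hEig ⟨k + 1, hk⟩
    simp only [Matrix.mulVec, dotProduct] at h
    rw [← h]
    rw [Finset.sum_eq_single (⟨k, by omega⟩ : Fin N)]
    · simp [hMdef, leslieSimple, Matrix.map_apply]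
    · intro b _ hb
      have hbk : b.val ≠ k := fun h' => hb (Fin.ext h')
      have hz : M ⟨k + 1, hk⟩ b = 0 := by
        simp only [hMdef, Matrix.map_apply, leslieSimple]
        rw [if_neg (by omega), if_neg (by omega)]
        simp
      rw [hz, zero_mul]
    · exact fun h => absurd (Finset.mem_univ _) h
  -- row 0 relation
  have hrow0 : μ * v ⟨0, by omega⟩ = (f : ℂ) * ∑ j, v j := by
    have h := hEig ⟨0, by omega⟩
    simp only [Matrix.mulVec, dotProduct] at h
    rw [← h]
    rw [Finset.mul_sum]
    refine Finset.sum_congr rfl fun j _ => ?_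
    simp [hMdef, leslieSimple, Matrix.map_apply]
  -- v k = v 0 / μ^k
  have hclaim : ∀ k (hk : k < N), μ ^ k * v ⟨k, hk⟩ = v ⟨0, by omega⟩ := by
    intro k
    induction k with
    | zero => intro hk; simp
    | succ n ih =>
      intro hk
      have h := hrow n hk
      have := ih (by omega)
      calc μ ^ (n + 1) * v ⟨n + 1, hk⟩ = μ ^ n * (μ * v ⟨n + 1, hk⟩) := by ring
        _ = μ ^ n * v ⟨n, by omega⟩ := by rw [← h]
        _ = v ⟨0, by omega⟩ := this
  by_cases hμ0 : μ = 0
  · simp [hμ0]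
  by_contra hge
  push_neg at hge
  -- v 0 ≠ 0
  have hv00 : v ⟨0, by omega⟩ ≠ 0 := by
    intro h0
    apply hv0
    funext i
    have := hclaim i.val i.isLt
    rw [Fin.eta] at this
    rw [h0] at this
    have hpow : μ ^ i.val ≠ 0 := pow_ne_zero _ hμ0
    exact (mul_eq_zero.mp this).resolve_left hpow
  set v0 := v ⟨0, by omega⟩ with hv0def
  have hvk : ∀ j : Fin N, v j = v0 * (μ⁻¹) ^ j.val := by
    intro j
    have := hclaim j.val j.isLt
    rw [Fin.eta] at this
    rw [hv0def, ← this, inv_pow, mul_comm (μ ^ _), mul_assoc, mul_inv_cancel₀ (pow_ne_zero _ hμ0), mul_one]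
  have hkey : μ = (f : ℂ) * ∑ j : Fin N, (μ⁻¹) ^ j.val := by
    have hmul : μ * v0 = ((f : ℂ) * ∑ j : Fin N, (μ⁻¹) ^ j.val) * v0 := by
      rw [hrow0]
      rw [show (∑ j, v j) = ∑ j : Fin N, v0 * (μ⁻¹) ^ j.val from
        Finset.sum_congr rfl fun j _ => hvk j]
      rw [← Finset.mul_sum]
      ring
    exact mul_right_cancel₀ hv00 hmul
  -- take absolute values
  have habsinv : ‖μ⁻¹‖ ≤ 1 := by
    rw [norm_inv]
    exact inv_le_one_of_one_le₀ hge
  have hbound : ‖μ‖ ≤ f * N := by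
    rw [hkey]
    rw [norm_mul]
    have h1 : ‖(f : ℂ)‖ = f := by
      simp [abs_of_pos hf0]
    rw [h1]
    have h2 : ‖∑ j : Fin N, (μ⁻¹) ^ j.val‖ ≤ N := by
      calc ‖∑ j : Fin N, (μ⁻¹) ^ j.val‖
          ≤ ∑ j : Fin N, ‖(μ⁻¹) ^ j.val‖ := by
            exact norm_sum_le _ _
        _ ≤ ∑ _j : Fin N, (1 : ℝ) := by
            apply Finset.sum_le_sum
            intro j _
            rw [norm_pow]
            exact pow_le_one₀ (norm_nonneg _) habsinv
        _ = N := by simp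
    exact mul_le_mul_of_nonneg_left h2 (le_of_lt hf0)
  have hNpos : (0 : ℝ) < N := by exact_mod_cast hN
  have hfN : f * N < 1 := by
    rw [lt_div_iff₀ hNpos] at hf
    exact hf
  linarith
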